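/- Let (R,≤),ρ be a causal realisation of a family of configurations F. Then ρ is extremal if and only if: (i) for every r ∈ R and every down-closed subset X of R with X ⊆ [r) and ρ(X ∪ {r}) ∈ F one has X = [r); and (ii) for all r, r' ∈ R, if [r) = [r') and ρ(r) = ρ(r') then r = r'. Here [r) denotes the set of strict predecessors of r. -/

import Mathlib

universe u v w

/-- The image of a set under a partial function. -/
def pimage {α : Type u} {β : Type v} (f : α → Option β) (x : Set α) : Set β :=
  {b | ∃ a ∈ x, f a = some b}

/-- A family of configurations over the set of events `A`:
a non-empty family of subsets, whose underlying set is all of `A`,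
closed under unions of finitely compatible subfamilies,
and satisfying the securing-chain condition. -/
structure ConfigFamily (A : Type u) where
  F : Set (Set A)
  nonempty : F.Nonempty
  covers : ∀ a : A, ∃ x ∈ F, a ∈ x
  unionClosed : ∀ X ⊆ F, (∀ Y ⊆ X, Y.Finite → ∃ z ∈ F, ∀ y ∈ Y, y ⊆ z) → ⋃₀ X ∈ F
  secured : ∀ x ∈ F, ∀ e ∈ x, ∃ l : List A, l ≠ [] ∧ l.getLast? = some e ∧
    (∀ a ∈ l, a ∈ x) ∧ ∀ i, 0 < i → i ≤ l.length → {a | a ∈ l.take i} ∈ F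

/-- A causal realisation of the family `C`: a partial order whose
principal lower sets are finite, together with a function to events
sending every down-closed subset to a configuration of the family. -/
structure Realisation {A : Type u} (C : ConfigFamily A) where
  carrier : Type u
  le : carrier → carrier → Prop
  le_refl : ∀ a, le a a
  le_trans : ∀ a b c, le a b → le b c → le a c
  le_antisymm : ∀ a b, le a b → le b a → a = b
  finPast : ∀ e, {e' | le e' e}.Finite
  ρ : carrier → A
  real : ∀ x : Set carrier, (∀ a ∈ x, ∀ b, le b a → b ∈ x) → ρ '' x ∈ C.F

namespace Realisation

variable {A : Type u} {C : ConfigFamily A}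

/-- Down-closed subsets of the carrier of a realisation. -/
def IsDown (r : Realisation C) (x : Set r.carrier) : Prop :=
  ∀ a ∈ x, ∀ b, r.le b a → b ∈ x

/-- The set `[a) = [a] \ {a}` of strict predecessors. -/
def spred (r : Realisation C) (a : r.carrier) : Set r.carrier :=
  {b | r.le b a ∧ b ≠ a}

/-- The carrier has a top element. -/
def HasTop (r : Realisation C) : Prop := ∃ t, ∀ a, r.le a t

end Realisation

/-- A map of realisations: a partial surjective function between the carriers,
preserving down-closed subsets and commuting with the functions to events. -/
structure RealMap {A : Type u} {C : ConfigFamily A} (r r' : Realisation C) where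
  f : r.carrier → Option r'.carrier
  surj : ∀ b, ∃ a, f a = some b
  presDown : ∀ x, r.IsDown x → r'.IsDown (pimage f x)
  commutes : ∀ a b, f a = some b → r.ρ a = r'.ρ b

namespace RealMap

variable {A : Type u} {C : ConfigFamily A} {r r' r₀ : Realisation C}

/-- The map is total. -/
def IsTotal (m : RealMap r r') : Prop := ∀ a, ∃ b, m.f a = some b

/-- The map is an isomorphism of realisations: it has an inverse map of
realisations, given by the inverse relation. -/
def IsIso (m : RealMap r r') : Prop :=
  ∃ m' : RealMap r' r, ∀ a b, m.f a = some b ↔ m'.f b = some a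

/-- `m : r → r₀` is a projection witnessed by `g`: `g` realises the carrier of
`r₀` as a subset of the carrier of `r` with the restricted order and restricted
function to events, and `m` is the inverse relation of this inclusion. -/
def IsProjectionVia (m : RealMap r r₀) (g : r₀.carrier → r.carrier) : Prop :=
  Function.Injective g ∧ (∀ a b, r₀.le a b ↔ r.le (g a) (g b)) ∧
    (∀ a, r₀.ρ a = r.ρ (g a)) ∧ (∀ a b, m.f a = some b ↔ g b = a)

/-- `m` is a projection. -/
def IsProjection (m : RealMap r r₀) : Prop := ∃ g, m.IsProjectionVia g

end RealMap

/-- A realisation is extremal when every total map of realisations from it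
is an isomorphism. -/
def Realisation.Extremal {A : Type u} {C : ConfigFamily A} (r : Realisation C) : Prop :=
  ∀ (r' : Realisation C) (m : RealMap r r'), m.IsTotal → m.IsIso

/-- A prime extremal realisation: extremal with a top element. -/
def Realisation.PrimeExtremal {A : Type u} {C : ConfigFamily A} (r : Realisation C) : Prop :=
  r.Extremal ∧ r.HasTop

/-- Isomorphism of realisations. -/
def RealIso {A : Type u} {C : ConfigFamily A} (r r' : Realisation C) : Prop :=
  ∃ m : RealMap r r', m.IsIso

/-- `m` is the composite of `m₁` followed by `m₂` (as partial functions). -/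
def CompEq {A : Type u} {C : ConfigFamily A} {r r' r'' : Realisation C}
    (m₁ : RealMap r r') (m₂ : RealMap r' r'') (m : RealMap r r'') : Prop :=
  ∀ a c, m.f a = some c ↔ ∃ b, m₁.f a = some b ∧ m₂.f b = some c

namespace Stmt7Aux

variable {A : Type u} {C : ConfigFamily A}

/-- Realisation with the strict past of `e` cut down to `X`. -/
def cut (r : Realisation C) (e : r.carrier) (X : Set r.carrier)
    (hXd : r.IsDown X) (hXs : X ⊆ r.spred e) (hXF : r.ρ '' (X ∪ {e}) ∈ C.F) :
    Realisation C where
  carrier := r.carrier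
  le x y := r.le x y ∧ (y = e → x ∈ X ∪ {e})
  le_refl a := ⟨r.le_refl a, fun h => Or.inr (by simp [h])⟩
  le_trans a b c h1 h2 := by
    refine ⟨r.le_trans a b c h1.1 h2.1, fun hc => ?_⟩
    rcases h2.2 hc with hb | hb
    · exact Or.inl (hXd b hb a h1.1)
    · exact h1.2 hb
  le_antisymm a b h1 h2 := r.le_antisymm a b h1.1 h2.1
  finPast y := (r.finPast y).subset (fun z hz => hz.1)
  ρ := r.ρ
  real := by
    intro x' hdown
    -- principal down-sets
    set P : r.carrier → Set r.carrier := fun y => {z | r.le z y ∧ (y = e → z ∈ X ∪ {e})} with hP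
    have hPF : ∀ y, r.ρ '' P y ∈ C.F := by
      intro y
      by_cases hy : y = e
      · have : P y = X ∪ {e} := by
          subst hy
          ext z
          constructor
          · intro hz; exact hz.2 rfl
          · rintro (hz | hz)
            · exact ⟨(hXs hz).1, fun _ => Or.inl hz⟩
            · simp only [Set.mem_singleton_iff] at hz
              subst hz; exact ⟨r.le_refl _, fun _ => Or.inr rfl⟩
        rw [this]; exact hXF
      · have : P y = {z | r.le z y} := by
          ext z; simp only [hP, Set.mem_setOf_eq]
          exact ⟨fun h => h.1, fun h => ⟨h, fun hye => absurd hye hy⟩⟩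
        rw [this]
        exact r.real _ (fun a ha b hb => r.le_trans b a y hb ha)
    have hcl : r.ρ '' {z | ∃ y ∈ x', r.le z y} ∈ C.F := by
      refine r.real _ ?_
      rintro a ⟨y, hy, hay⟩ b hb
      exact ⟨y, hy, r.le_trans b a y hb hay⟩
    have hPsub : ∀ y ∈ x', P y ⊆ x' := by
      intro y hy z hz
      exact hdown y hy z ⟨hz.1, hz.2⟩
    have key : r.ρ '' x' = ⋃₀ {s | ∃ y ∈ x', s = r.ρ '' P y} := by
      ext a
      constructor
      · rintro ⟨z, hz, rfl⟩
        exact ⟨r.ρ '' P z, ⟨z, hz, rfl⟩, ⟨z, ⟨r.le_refl z, fun h => by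
          subst h; exact Or.inr rfl⟩, rfl⟩⟩
      · rintro ⟨s, ⟨y, hy, rfl⟩, ⟨z, hz, rfl⟩⟩
        exact ⟨z, hPsub y hy hz, rfl⟩
    rw [key]
    refine C.unionClosed _ ?_ ?_
    · rintro s ⟨y, hy, rfl⟩; exact hPF y
    · intro Y hY hYfin
      refine ⟨r.ρ '' {z | ∃ y ∈ x', r.le z y}, hcl, ?_⟩
      intro s hs
      rcases hY hs with ⟨y, hy, rfl⟩
      exact Set.image_mono (fun z hz => ⟨y, hy, hz.1⟩)

end Stmt7Aux
lemma pimage_some {α : Type u} (x : Set α) : pimage (fun a => some a) x = x := by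
  ext b; simp [pimage]

namespace Stmt7Aux2
variable {A : Type u} {C : ConfigFamily A}

lemma forward_i (r : Realisation C) (hext : r.Extremal)
    (e : r.carrier) (X : Set r.carrier) (hXd : r.IsDown X) (hXs : X ⊆ r.spred e)
    (hXF : r.ρ '' (X ∪ {e}) ∈ C.F) : X = r.spred e := by
  let r' := Stmt7Aux.cut r e X hXd hXs hXF
  let m : RealMap r r' := {
    f := fun a => some a
    surj := fun b => ⟨b, rfl⟩
    presDown := by
      intro x hx
      rw [show pimage (fun a : r.carrier => (some a : Option r'.carrier)) x = x from pimage_some x]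
      intro a ha b hb
      exact hx a ha b hb.1
    commutes := by
      rintro a b hab
      cases hab
      rfl }
  rcases hext r' m (fun a => ⟨a, rfl⟩) with ⟨m', hm'⟩
  have hm'id : ∀ b : r'.carrier, m'.f b = some b := fun b => (hm' b b).mp rfl
  -- X ∪ {e} is down-closed in r'
  have hdown' : r'.IsDown (X ∪ {e}) := by
    rintro a (ha | ha) b hb
    · exact Or.inl (hXd a ha b hb.1)
    · replace ha : a = e := ha
      exact hb.2 ha
  have := m'.presDown _ hdown'
  have himg : pimage m'.f (X ∪ {e}) = X ∪ {e} := by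
    ext b
    constructor
    · rintro ⟨a, ha, hab⟩
      rw [hm'id a] at hab
      cases hab; exact ha
    · intro hb; exact ⟨b, hb, hm'id b⟩
  rw [himg] at this
  -- so X ∪ {e} is down-closed in r, hence spred e ⊆ X
  apply Set.Subset.antisymm hXs
  intro z hz
  rcases this e (Or.inr rfl) z hz.1 with h | h
  · exact h
  · exact absurd h hz.2

end Stmt7Aux2
namespace Stmt7Merge
variable {A : Type u} {C : ConfigFamily A}

section
variable (r : Realisation C) (a b : r.carrier)

lemma not_le_ba (hab : a ≠ b) (hsp : r.spred a = r.spred b) : ¬ r.le b a := by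
  intro h
  have : b ∈ r.spred a := ⟨h, Ne.symm hab⟩
  rw [hsp] at this
  exact this.2 rfl

lemma not_le_ab (hab : a ≠ b) (hsp : r.spred a = r.spred b) : ¬ r.le a b := by
  intro h
  have : a ∈ r.spred b := ⟨h, hab⟩
  rw [← hsp] at this
  exact this.2 rfl

lemma le_b_to_a (hsp : r.spred a = r.spred b) : ∀ x, r.le x b → x ≠ b → r.le x a := by
  intro x h hx
  have : x ∈ r.spred b := ⟨h, hx⟩
  rw [← hsp] at this
  exact this.1

lemma le_a_to_b (hsp : r.spred a = r.spred b) : ∀ x, r.le x a → x ≠ a → r.le x b := by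
  intro x h hx
  have : x ∈ r.spred a := ⟨h, hx⟩
  rw [hsp] at this
  exact this.1

/-- Realisation merging `b` into `a`. -/
def merge (hab : a ≠ b) (hsp : r.spred a = r.spred b) (hr : r.ρ a = r.ρ b) : Realisation C where
  carrier := {x : r.carrier // x ≠ b}
  le x y := r.le x.1 y.1 ∨ ((r.le x.1 a ∨ r.le x.1 b) ∧ (r.le a y.1 ∨ r.le b y.1))
  le_refl x := Or.inl (r.le_refl x.1)
  le_trans x y z h1 h2 := by
    rcases h1 with h1 | ⟨h1, h1'⟩
    · rcases h2 with h2 | ⟨h2, h2'⟩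
      · exact Or.inl (r.le_trans _ _ _ h1 h2)
      · refine Or.inr ⟨?_, h2'⟩
        rcases h2 with h2 | h2
        · exact Or.inl (r.le_trans _ _ _ h1 h2)
        · exact Or.inr (r.le_trans _ _ _ h1 h2)
    · rcases h2 with h2 | ⟨h2, h2'⟩
      · refine Or.inr ⟨h1, ?_⟩
        rcases h1' with h | h
        · exact Or.inl (r.le_trans _ _ _ h h2)
        · exact Or.inr (r.le_trans _ _ _ h h2)
      · exact Or.inr ⟨h1, h2'⟩
  le_antisymm x y h1 h2 := by
    -- normalise: x.1 ≤ a and y.1 ≤ a in the "right" cases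
    have normx : ∀ (w : {x : r.carrier // x ≠ b}), r.le w.1 a ∨ r.le w.1 b → r.le w.1 a := by
      rintro w (h | h)
      · exact h
      · exact le_b_to_a r a b hsp w.1 h w.2
    rcases h1 with h1 | ⟨h1, h1'⟩
    · rcases h2 with h2 | ⟨h2, h2'⟩
      · exact Subtype.ext (r.le_antisymm _ _ h1 h2)
      · -- le x y, (le y a ∨ le y b), (le a x ∨ le b x)
        have hya := normx y h2
        rcases h2' with h | h
        · -- a ≤ x ≤ y ≤ a
          have hxa : x.1 = a := r.le_antisymm _ _ (r.le_trans _ _ _ h1 hya) h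
          have hyaeq : y.1 = a := r.le_antisymm _ _ hya (hxa ▸ h1)
          exact Subtype.ext (hxa.trans hyaeq.symm)
        · exact absurd (r.le_trans _ _ _ h (r.le_trans _ _ _ h1 hya)) (not_le_ba r a b hab hsp)
    · rcases h2 with h2 | ⟨h2, h2'⟩
      · have hxa := normx x h1
        rcases h1' with h | h
        · have hyeq : y.1 = a := r.le_antisymm _ _ (r.le_trans _ _ _ h2 hxa) h
          have hxeq : x.1 = a := r.le_antisymm _ _ hxa (hyeq ▸ h2)
          exact Subtype.ext (hxeq.trans hyeq.symm)
        · exact absurd (r.le_trans _ _ _ h (r.le_trans _ _ _ h2 hxa)) (not_le_ba r a b hab hsp)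
      · have hxa := normx x h1
        have hya := normx y h2
        have hxeq : x.1 = a := by
          rcases h2' with h | h
          · exact r.le_antisymm _ _ hxa h
          · exact absurd (r.le_trans _ _ _ h hxa) (not_le_ba r a b hab hsp)
        have hyeq : y.1 = a := by
          rcases h1' with h | h
          · exact r.le_antisymm _ _ hya h
          · exact absurd (r.le_trans _ _ _ h hya) (not_le_ba r a b hab hsp)
        exact Subtype.ext (hxeq.trans hyeq.symm)
  finPast y := by
    have : {x : {x : r.carrier // x ≠ b} |
        r.le x.1 y.1 ∨ ((r.le x.1 a ∨ r.le x.1 b) ∧ (r.le a y.1 ∨ r.le b y.1))} ⊆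
        Subtype.val ⁻¹' ({z | r.le z y.1} ∪ ({z | r.le z a} ∪ {z | r.le z b})) := by
      rintro x (h | ⟨h, -⟩)
      · exact Or.inl h
      · rcases h with h | h
        · exact Or.inr (Or.inl h)
        · exact Or.inr (Or.inr h)
    refine Set.Finite.subset (Set.Finite.preimage (Subtype.val_injective.injOn) ?_) this
    exact ((r.finPast y.1).union ((r.finPast a).union (r.finPast b)))
  ρ x := r.ρ x.1
  real := by
    intro x' hdown
    set xa : {x : r.carrier // x ≠ b} := ⟨a, hab⟩ with hxa
    set x : Set r.carrier := Subtype.val '' x' ∪ {z | z = b ∧ xa ∈ x'} with hx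
    have hxdown : ∀ u ∈ x, ∀ v, r.le v u → v ∈ x := by
      rintro u (⟨y, hy, rfl⟩ | ⟨hub, hxa'⟩) v hv
      · by_cases hvb : v = b
        · subst hvb
          have : xa ∈ x' := hdown y hy xa (Or.inr ⟨Or.inl (r.le_refl a), Or.inr hv⟩)
          exact Or.inr ⟨rfl, this⟩
        · exact Or.inl ⟨⟨v, hvb⟩, hdown y hy ⟨v, hvb⟩ (Or.inl hv), rfl⟩
      · rw [hub] at hv
        by_cases hvb : v = b
        · exact Or.inr ⟨hvb, hxa'⟩
        · have hva : r.le v a := le_b_to_a r a b hsp v hv hvb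
          exact Or.inl ⟨⟨v, hvb⟩, hdown xa hxa' ⟨v, hvb⟩ (Or.inl hva), rfl⟩
    have himg : (fun x : {x : r.carrier // x ≠ b} => r.ρ x.1) '' x' = r.ρ '' x := by
      apply Set.Subset.antisymm
      · rintro - ⟨y, hy, rfl⟩
        exact ⟨y.1, Or.inl ⟨y, hy, rfl⟩, rfl⟩
      · rintro - ⟨u, (⟨y, hy, rfl⟩ | ⟨hub, hxa'⟩), rfl⟩
        · exact ⟨y, hy, rfl⟩
        · rw [hub]
          exact ⟨xa, hxa', hr⟩
    rw [himg]
    exact r.real x hxdown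

end
end Stmt7Merge
namespace Stmt7Fwd2
variable {A : Type u} {C : ConfigFamily A}

lemma forward_ii (r : Realisation C) (hext : r.Extremal)
    (a b : r.carrier) (hsp : r.spred a = r.spred b) (hr : r.ρ a = r.ρ b) : a = b := by
  classical
  by_contra hab
  let r' := Stmt7Merge.merge r a b hab hsp hr
  have hle_b_a := Stmt7Merge.le_b_to_a r a b hsp
  have hle_a_b := Stmt7Merge.le_a_to_b r a b hsp
  let m : RealMap r r' := {
    f := fun u => if h : u = b then some ⟨a, hab⟩ else some ⟨u, h⟩
    surj := fun y => ⟨y.1, by simp only [dif_neg y.2]; rfl⟩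
    presDown := by
      intro x hx
      -- membership characterisation
      have hmem : ∀ v : r'.carrier, v ∈ pimage (fun u => if h : u = b then
          (some ⟨a, hab⟩ : Option r'.carrier) else some ⟨u, h⟩) x ↔
          (v.1 ∈ x ∨ (v.1 = a ∧ b ∈ x)) := by
        intro v
        constructor
        · rintro ⟨u, hu, hfu⟩
          by_cases h : u = b
          · simp only [dif_pos h] at hfu
            cases hfu
            subst h
            exact Or.inr ⟨rfl, hu⟩
          · simp only [dif_neg h] at hfu
            cases hfu
            exact Or.inl hu
        · rintro (hv | ⟨hva, hbx⟩)
          · exact ⟨v.1, hv, by simp only [dif_neg v.2]; rfl⟩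
          · exact ⟨b, hbx, by simp only [dif_pos rfl]; exact congrArg some (Subtype.ext hva.symm)⟩
      intro v hv w hw
      rw [hmem] at hv ⊢
      -- hw : r'.le w v
      rcases hw with hw | ⟨hw1, hw2⟩
      · -- w.1 ≤ v.1
        rcases hv with hv | ⟨hva, hbx⟩
        · exact Or.inl (hx v.1 hv w.1 hw)
        · rw [hva] at hw
          by_cases hwa : w.1 = a
          · exact Or.inr ⟨hwa, hbx⟩
          · exact Or.inl (hx b hbx w.1 (hle_a_b w.1 hw hwa))
      · -- (le w a ∨ le w b) ∧ (le a v ∨ le b v)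
        have hwa : r.le w.1 a := by
          rcases hw1 with h | h
          · exact h
          · exact hle_b_a w.1 h w.2
        have habx : a ∈ x ∨ b ∈ x := by
          rcases hv with hv | ⟨hva, hbx⟩
          · rcases hw2 with h | h
            · exact Or.inl (hx v.1 hv a h)
            · exact Or.inr (hx v.1 hv b h)
          · exact Or.inr hbx
        by_cases hwaeq : w.1 = a
        · rcases habx with h | h
          · exact Or.inl (hwaeq ▸ h)
          · exact Or.inr ⟨hwaeq, h⟩
        · rcases habx with h | h
          · exact Or.inl (hx a h w.1 hwa)
          · exact Or.inl (hx b h w.1 (hle_a_b w.1 hwa hwaeq))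
    commutes := by
      intro u v huv
      by_cases h : u = b
      · simp only [dif_pos h] at huv
        cases huv
        rw [h]
        exact hr.symm
      · simp only [dif_neg h] at huv
        cases huv
        rfl }
  have htot : m.IsTotal := by
    intro u
    by_cases h : u = b
    · exact ⟨⟨a, hab⟩, dif_pos h⟩
    · exact ⟨⟨u, h⟩, dif_neg h⟩
  rcases hext r' m htot with ⟨m', hm'⟩
  have h1 : m'.f ⟨a, hab⟩ = some a := (hm' a ⟨a, hab⟩).mp (dif_neg hab : m.f a = some ⟨a, hab⟩)
  have h2 : m'.f ⟨a, hab⟩ = some b := (hm' b ⟨a, hab⟩).mp (dif_pos rfl : m.f b = some ⟨a, hab⟩)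
  rw [h1] at h2
  exact hab (Option.some_injective _ h2)

end Stmt7Fwd2
namespace Stmt7Back
variable {A : Type u} {C : ConfigFamily A}

lemma backward (r : Realisation C)
    (h1 : ∀ (e : r.carrier) (X : Set r.carrier), r.IsDown X → X ⊆ r.spred e →
      r.ρ '' (X ∪ {e}) ∈ C.F → X = r.spred e)
    (h2 : ∀ a b, r.spred a = r.spred b → r.ρ a = r.ρ b → a = b) :
    r.Extremal := by
  intro r' m htot
  classical
  let g : r.carrier → r'.carrier := fun u => Classical.choose (htot u)
  have hg : ∀ u, m.f u = some (g u) := fun u => Classical.choose_spec (htot u)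
  have hcomm : ∀ u, r.ρ u = r'.ρ (g u) := fun u => m.commutes u (g u) (hg u)
  have hsurj : ∀ v, ∃ u, g u = v := by
    intro v
    rcases m.surj v with ⟨u, hu⟩
    rw [hg u] at hu
    exact ⟨u, Option.some_injective _ hu⟩
  have hpim : ∀ x, pimage m.f x = g '' x := by
    intro x
    ext v
    constructor
    · rintro ⟨u, hu, hf⟩
      rw [hg u] at hf
      exact ⟨u, hu, Option.some_injective _ hf⟩
    · rintro ⟨u, hu, rfl⟩
      exact ⟨u, hu, hg u⟩
  have himg : ∀ x, r.IsDown x → r'.IsDown (g '' x) := fun x hx => hpim x ▸ m.presDown x hx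
  have hpastdown : ∀ a : r.carrier, r.IsDown {z | r.le z a} :=
    fun a z hz w hw => r.le_trans _ _ _ hw hz
  have hcover : ∀ (a : r.carrier) v, r'.le v (g a) → ∃ y, r.le y a ∧ g y = v := by
    intro a v hv
    rcases himg _ (hpastdown a) (g a) ⟨a, r.le_refl a, rfl⟩ v hv with ⟨y, hy, hgy⟩
    exact ⟨y, hy, hgy⟩
  have hlt : ∀ (u y : r.carrier), r.le y u → y ≠ u →
      {z | r.le z y}.ncard < {z | r.le z u}.ncard := by
    intro u y hy hne
    refine Set.ncard_lt_ncard ⟨fun w hw => r.le_trans _ _ _ hw hy, ?_⟩ (r.finPast u)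
    intro hcon
    exact hne (r.le_antisymm _ _ hy (hcon (r.le_refl u)))
  have hpos : ∀ a : r.carrier, 0 < {z | r.le z a}.ncard := by
    intro a
    exact (Set.ncard_pos (r.finPast a)).mpr ⟨a, r.le_refl a⟩
  -- main induction: strict monotonicity
  have key : ∀ n (a : r.carrier), {z | r.le z a}.ncard ≤ n →
      ∀ z, r.le z a → z ≠ a → r'.le (g z) (g a) ∧ g z ≠ g a := by
    intro n
    induction n with
    | zero => intro a ha; have := hpos a; omega
    | succ n ih =>
      intro a hcard
      have hmono : ∀ y, r.le y a → y ≠ a → ∀ z, r.le z y → r'.le (g z) (g y) := by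
        intro y hy hya z hz
        by_cases hzy : z = y
        · subst hzy; exact r'.le_refl _
        · have hylt : {z | r.le z y}.ncard ≤ n := by
            have := hlt a y hy hya
            omega
          exact (ih y hylt z hz hzy).1
      set X : Set r.carrier := {y | (r.le y a ∧ y ≠ a) ∧ r'.le (g y) (g a) ∧ g y ≠ g a}
        with hXdef
      have hXs : X ⊆ r.spred a := fun y hy => hy.1
      have hXd : r.IsDown X := by
        intro y hy z hz
        have hza : r.le z a := r.le_trans _ _ _ hz hy.1.1
        have hzna : z ≠ a := by
          rintro rfl
          exact hy.1.2 (r.le_antisymm _ _ hy.1.1 hz)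
        have hgz : r'.le (g z) (g y) := hmono y hy.1.1 hy.1.2 z hz
        have hgza : r'.le (g z) (g a) := r'.le_trans _ _ _ hgz hy.2.1
        refine ⟨⟨hza, hzna⟩, hgza, ?_⟩
        intro heq
        exact hy.2.2 (r'.le_antisymm _ _ hy.2.1 (heq ▸ hgz))
      have hXF : r.ρ '' (X ∪ {a}) ∈ C.F := by
        have heq : r.ρ '' (X ∪ {a}) = r'.ρ '' {v | r'.le v (g a)} := by
          apply Set.Subset.antisymm
          · rintro - ⟨u, (hu | hu), rfl⟩
            · rw [hcomm u]
              exact ⟨g u, hu.2.1, rfl⟩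
            · simp only [Set.mem_singleton_iff] at hu
              subst hu
              rw [hcomm u]
              exact ⟨g u, r'.le_refl _, rfl⟩
          · rintro - ⟨v, hv, rfl⟩
            rcases hcover a v hv with ⟨y, hy, rfl⟩
            by_cases hya : y = a
            · subst hya
              exact ⟨y, Or.inr rfl, hcomm y⟩
            · by_cases hgya : g y = g a
              · exact ⟨a, Or.inr rfl, by rw [hcomm a, hgya]⟩
              · exact ⟨y, Or.inl ⟨⟨hy, hya⟩, hv, hgya⟩, hcomm y⟩
        rw [heq]
        exact r'.real _ (fun v hv w hw => r'.le_trans _ _ _ hw hv)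
      have hXeq : X = r.spred a := h1 a X hXd hXs hXF
      intro z hz hza
      have : z ∈ X := hXeq ▸ (⟨hz, hza⟩ : z ∈ r.spred a)
      exact this.2
  have hstrict : ∀ (a z : r.carrier), r.le z a → z ≠ a → r'.le (g z) (g a) ∧ g z ≠ g a :=
    fun a => key _ a le_rfl
  have hmono : ∀ (a z : r.carrier), r.le z a → r'.le (g z) (g a) := by
    intro a z hz
    by_cases h : z = a
    · subst h; exact r'.le_refl _
    · exact (hstrict a z hz h).1
  have hcover' : ∀ (a : r.carrier) v, r'.le v (g a) → v ≠ g a →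
      ∃ y, (r.le y a ∧ y ≠ a) ∧ g y = v := by
    intro a v hv hne
    rcases hcover a v hv with ⟨y, hy, rfl⟩
    refine ⟨y, ⟨hy, ?_⟩, rfl⟩
    rintro rfl
    exact hne rfl
  -- injectivity
  have inj : ∀ n (a b : r.carrier),
      {z | r.le z a}.ncard + {z | r.le z b}.ncard ≤ n → g a = g b → a = b := by
    intro n
    induction n with
    | zero => intro a b hc; have := hpos a; omega
    | succ n ih =>
      intro a b hc hgab
      have haux : ∀ u w : r.carrier,
          {z | r.le z u}.ncard + {z | r.le z w}.ncard ≤ n + 1 → g u = g w →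
          r.spred u ⊆ r.spred w := by
        intro u w huw hguw y hy
        have h3 := hstrict u y hy.1 hy.2
        rw [hguw] at h3
        rcases hcover' w (g y) h3.1 h3.2 with ⟨z, hz, hgz⟩
        have hy' := hlt u y hy.1 hy.2
        have hz' := hlt w z hz.1 hz.2
        have : y = z := ih y z (by omega) hgz.symm
        rw [this]
        exact ⟨hz.1, hz.2⟩
      have hspab : r.spred a = r.spred b :=
        Set.Subset.antisymm (haux a b hc hgab) (haux b a (by omega) hgab.symm)
      exact h2 a b hspab (by rw [hcomm a, hcomm b, hgab])
  have hinj : Function.Injective g := fun a b h => inj _ a b le_rfl h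
  have hbij : Function.Bijective g := ⟨hinj, hsurj⟩
  have hrefl : ∀ a b : r.carrier, r'.le (g a) (g b) → r.le a b := by
    intro a b h
    by_cases heq : g a = g b
    · rw [hinj heq]
      exact r.le_refl b
    · rcases hcover' b (g a) h heq with ⟨y, hy, hgy⟩
      rw [hinj hgy.symm]
      exact hy.1
  let e := Equiv.ofBijective g hbij
  have hge : ∀ v, g (e.symm v) = v := fun v => e.apply_symm_apply v
  have heg : ∀ u, e.symm (g u) = u := fun u => e.symm_apply_apply u
  refine ⟨{ f := fun v => some (e.symm v)
            surj := fun u => ⟨g u, by simp only [heg u]⟩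
            presDown := ?_
            commutes := ?_ }, ?_⟩
  · intro x' hx'
    intro u hu w hw
    rcases hu with ⟨v, hv, hvu⟩
    have hvu' : e.symm v = u := Option.some_injective _ hvu
    have hgw : r'.le (g w) v := by
      have := hmono u w hw
      rw [← hvu', hge v] at this
      exact this
    have : g w ∈ x' := hx' v hv (g w) hgw
    exact ⟨g w, this, by simp only [heg w]⟩
  · intro v u huv
    have : e.symm v = u := Option.some_injective _ huv
    subst this
    rw [hcomm (e.symm v), hge v]
  · intro u v
    constructor
    · intro h
      rw [hg u] at h
      have : g u = v := Option.some_injective _ h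
      rw [← this]
      show some (e.symm (g u)) = some u
      rw [heg u]
    · intro h
      have : e.symm v = u := Option.some_injective _ h
      rw [hg u]
      rw [← this, hge v]

end Stmt7Back

/-- Characterisation of extremal realisations. -/
theorem stmt7 {A : Type u} (C : ConfigFamily A) (r : Realisation C) :
    r.Extremal ↔
      ((∀ (e : r.carrier) (X : Set r.carrier), r.IsDown X → X ⊆ r.spred e →
          r.ρ '' (X ∪ {e}) ∈ C.F → X = r.spred e) ∧
       (∀ a b, r.spred a = r.spred b → r.ρ a = r.ρ b → a = b)) := by
  constructor
  · intro hext
    exact ⟨fun e X hXd hXs hXF => Stmt7Aux2.forward_i r hext e X hXd hXs hXF,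
           fun a b hsp hr => Stmt7Fwd2.forward_ii r hext a b hsp hr⟩
  · rintro ⟨h1, h2⟩
    exact Stmt7Back.backward r h1 h2
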